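/- Let $Z_1,\dots,Z_n$ be i.i.d. uniform on $[0,1]$ and define the lattice $Q_i^n = i/(n+1)$ for $i = 1,\dots,n$. Then $\mathbb{E}\left[\min_{\pi \in S_n} \frac{1}{n} \sum_{i=1}^n (Z_i - Q^n_{\pi(i)})^2\right] \le \frac{1}{4(n+2)}$; in particular, the expected optimal assignment cost tends to $0$ as $n \to \infty$. -/

import Mathlib

open MeasureTheory ProbabilityTheory Filter

noncomputable def unif : Measure ℝ := volume.restrict (Set.Icc (0:ℝ) 1)

instance : IsProbabilityMeasure unif := by
  constructor; simp [unif, Real.volume_Icc]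

lemma aux_int_pow (p : ℕ) : Integrable (fun x : ℝ => x ^ p) unif :=
  (continuous_pow p).continuousOn.integrableOn_compact isCompact_Icc

lemma aux_moment (p : ℕ) : ∫ x, x ^ p ∂unif = 1 / ((p:ℝ) + 1) := by
  rw [unif, MeasureTheory.integral_Icc_eq_integral_Ioc,
    ← intervalIntegral.integral_of_le zero_le_one]
  simp [integral_pow]

lemma unif_meas_lt {x : ℝ} (hx : x ∈ Set.Icc (0:ℝ) 1) :
    (unif {y | y < x}).toReal = x := by
  have : {y : ℝ | y < x} = Set.Iio x := rfl
  rw [this, unif, Measure.restrict_apply measurableSet_Iio]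
  rw [show Set.Iio x ∩ Set.Icc 0 1 = Set.Ico 0 x by
    ext y; simp only [Set.mem_inter_iff, Set.mem_Iio, Set.mem_Icc, Set.mem_Ico]; constructor
    · rintro ⟨h1, h2, h3⟩; exact ⟨h2, h1⟩
    · rintro ⟨h1, h2⟩; exact ⟨h2, h1, h2.le.trans hx.2⟩]
  rw [Real.volume_Ico, sub_zero, ENNReal.toReal_ofReal hx.1]

lemma F_meas : Measurable (fun p : ℝ × ℝ => if p.2 < p.1 then p.1 else 0) :=
  Measurable.ite (measurableSet_lt measurable_snd measurable_fst) measurable_fst measurable_const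

lemma ae_mem_sq : ∀ᵐ p ∂(unif.prod unif), p ∈ Set.Icc (0:ℝ) 1 ×ˢ Set.Icc (0:ℝ) 1 := by
  rw [unif, Measure.prod_restrict]
  exact ae_restrict_mem ((measurableSet_Icc).prod measurableSet_Icc)

lemma F_integrable : Integrable (fun p : ℝ × ℝ => if p.2 < p.1 then p.1 else 0)
    (unif.prod unif) := by
  apply Integrable.mono' (g := fun _ => (1:ℝ)) (integrable_const 1)
    F_meas.aestronglyMeasurable
  filter_upwards [ae_mem_sq] with p hp
  rcases hp with ⟨h1, h2⟩
  rw [Real.norm_eq_abs]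
  split_ifs
  · rw [abs_of_nonneg h1.1]; exact h1.2
  · simp

lemma F_integral : ∫ p, (if p.2 < p.1 then p.1 else 0) ∂(unif.prod unif) = 1 / 3 := by
  rw [MeasureTheory.integral_prod _ F_integrable]
  have h : ∀ᵐ x ∂unif, (∫ y, (if y < x then x else 0) ∂unif) = x ^ 2 := by
    filter_upwards [ae_restrict_mem (measurableSet_Icc : MeasurableSet (Set.Icc (0:ℝ) 1))]
      with x hx
    have : (fun y => if y < x then x else 0) = Set.indicator {y : ℝ | y < x} (fun _ => x) := by
      ext y; simp [Set.indicator_apply]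
    rw [this, MeasureTheory.integral_indicator_const _
      (show MeasurableSet {y : ℝ | y < x} from measurableSet_Iio), smul_eq_mul,
      measureReal_def, unif_meas_lt hx]
    ring
  rw [integral_congr_ae h, aux_moment]
  norm_num

lemma sum_sq_aux (n : ℕ) : ∑ j ∈ Finset.range n, ((j:ℝ)+1)^2
    = (n:ℝ)*((n:ℝ)+1)*(2*(n:ℝ)+1)/6 := by
  induction n with
  | zero => simp
  | succ m ih =>
    rw [Finset.sum_range_succ, ih]
    push_cast
    ring

lemma pointwise_bound (n : ℕ) (z : Fin n → ℝ) (hz : ∀ i k, i ≠ k → z i ≠ z k) :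
    (⨅ π : Equiv.Perm (Fin n), (1/(n:ℝ)) * ∑ i, (z i - ((π i:ℝ)+1)/((n:ℝ)+1))^2)
      ≤ (1/(n:ℝ)) * ((∑ i, (z i)^2)
          - (2/((n:ℝ)+1)) * (∑ i, (z i + ∑ k, (if z k < z i then z i else 0)))
          + ∑ j : Fin n, (((j:ℝ)+1)/((n:ℝ)+1))^2) := by
  classical
  set N : Fin n → ℕ := fun i => (Finset.univ.filter (fun k => z k < z i)).card with hN
  have hlt : ∀ i, N i < n := by
    intro i
    have : (Finset.univ.filter (fun k => z k < z i)) ⊂ Finset.univ := by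
      refine ⟨Finset.filter_subset _ _, fun hsub => ?_⟩
      have := hsub (Finset.mem_univ i)
      simp only [Finset.mem_filter] at this
      exact lt_irrefl _ this.2
    simpa using Finset.card_lt_card this
  set f : Fin n → Fin n := fun i => ⟨N i, hlt i⟩ with hf
  have key : ∀ i j, z i < z j → N i < N j := by
    intro i j hij
    apply Finset.card_lt_card
    refine ⟨fun k hk => ?_, fun hsub => ?_⟩
    · simp only [Finset.mem_filter] at hk ⊢
      exact ⟨hk.1, hk.2.trans hij⟩
    · have hij' : i ∈ Finset.univ.filter (fun k => z k < z j) := by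
        simp [hij]
      have := hsub hij'
      simp only [Finset.mem_filter] at this
      exact lt_irrefl _ this.2
  have hinj : Function.Injective f := by
    intro i j h
    by_contra hne
    rcases lt_or_gt_of_ne (hz i j hne) with h' | h'
    · exact absurd (Fin.mk.inj_iff.mp h) (Nat.ne_of_lt (key i j h'))
    · exact absurd (Fin.mk.inj_iff.mp h) (Nat.ne_of_gt (key j i h'))
  set π : Equiv.Perm (Fin n) := Equiv.ofBijective f (Finite.injective_iff_bijective.mp hinj)
  have hbdd : BddBelow (Set.range (fun π : Equiv.Perm (Fin n) =>
      (1/(n:ℝ)) * ∑ i, (z i - ((π i:ℝ)+1)/((n:ℝ)+1))^2)) :=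
    (Set.finite_range _).bddBelow
  refine le_trans (ciInf_le hbdd π) (le_of_eq ?_)
  congr 1
  have hNi : ∀ i, ((π i : Fin n) : ℝ) = ∑ k, if z k < z i then (1:ℝ) else 0 := by
    intro i
    have : (π i : Fin n) = f i := rfl
    rw [this, hf]
    simp only [hN, Finset.card_filter]
    push_cast
    rfl
  have step : ∀ i : Fin n, (z i - ((π i:ℝ)+1)/((n:ℝ)+1))^2
      = (z i)^2 - (2/((n:ℝ)+1)) * (z i + ∑ k, (if z k < z i then z i else 0))
        + ((((π i : Fin n) : ℝ)+1)/((n:ℝ)+1))^2 := by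
    intro i
    have hz_sum : (∑ k, (if z k < z i then z i else 0))
        = z i * ∑ k, (if z k < z i then (1:ℝ) else 0) := by
      rw [Finset.mul_sum]
      exact Finset.sum_congr rfl fun k _ => by split_ifs <;> ring
    rw [hz_sum, ← hNi i]
    have hn1 : ((n:ℝ)+1) ≠ 0 := by positivity
    field_simp
    ring
  rw [Finset.sum_congr rfl (fun i _ => step i)]
  rw [Finset.sum_add_distrib, Finset.sum_sub_distrib, ← Finset.mul_sum]
  congr 1
  exact Equiv.sum_comp π (fun j => ((((j : Fin n):ℝ)+1)/((n:ℝ)+1))^2)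

section Pair
variable {Ω : Type*} [MeasurableSpace Ω] (P : Measure Ω) [IsProbabilityMeasure P]
  {n : ℕ} (Z : Fin n → Ω → ℝ)
  (hmeas : ∀ i, Measurable (Z i))
  (hindep : iIndepFun Z P)
  (hunif : ∀ i, Measure.map (Z i) P = unif)

include hmeas hunif in
lemma Zpow_integrable (i : Fin n) (p : ℕ) : Integrable (fun ω => Z i ω ^ p) P := by
  have h1 : AEStronglyMeasurable (fun x : ℝ => x ^ p) (Measure.map (Z i) P) := by
    rw [hunif i]; exact (aux_int_pow p).aestronglyMeasurable
  exact (integrable_map_measure h1 (hmeas i).aemeasurable).mp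
    (by rw [hunif i]; exact aux_int_pow p)

include hmeas hunif in
lemma Zpow_integral (i : Fin n) (p : ℕ) : ∫ ω, Z i ω ^ p ∂P = 1 / ((p:ℝ)+1) := by
  have h1 : AEStronglyMeasurable (fun x : ℝ => x ^ p) (Measure.map (Z i) P) := by
    rw [hunif i]; exact (aux_int_pow p).aestronglyMeasurable
  have h := MeasureTheory.integral_map (hmeas i).aemeasurable h1
  rw [hunif i, aux_moment] at h
  exact h.symm

include hmeas hindep hunif in
lemma pair_law {i k : Fin n} (hik : i ≠ k) :
    Measure.map (fun ω => (Z i ω, Z k ω)) P = unif.prod unif := by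
  have h := (indepFun_iff_map_prod_eq_prod_map_map (hmeas i).aemeasurable
    (hmeas k).aemeasurable).mp (hindep.indepFun hik)
  rw [h, hunif i, hunif k]

include hmeas hindep hunif in
lemma ite_integrable {i k : Fin n} (hik : i ≠ k) :
    Integrable (fun ω => if Z k ω < Z i ω then Z i ω else 0) P := by
  have hm := pair_law P Z hmeas hindep hunif hik
  have hF : AEStronglyMeasurable (fun p : ℝ × ℝ => if p.2 < p.1 then p.1 else 0)
      (Measure.map (fun ω => (Z i ω, Z k ω)) P) := by
    rw [hm]; exact F_meas.aestronglyMeasurable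
  exact (integrable_map_measure hF ((hmeas i).prodMk (hmeas k)).aemeasurable).mp
    (by rw [hm]; exact F_integrable)

include hmeas hindep hunif in
lemma ite_integral {i k : Fin n} (hik : i ≠ k) :
    ∫ ω, (if Z k ω < Z i ω then Z i ω else 0) ∂P = 1/3 := by
  have hm := pair_law P Z hmeas hindep hunif hik
  have hF : AEStronglyMeasurable (fun p : ℝ × ℝ => if p.2 < p.1 then p.1 else 0)
      (Measure.map (fun ω => (Z i ω, Z k ω)) P) := by
    rw [hm]; exact F_meas.aestronglyMeasurable
  have h := MeasureTheory.integral_map ((hmeas i).prodMk (hmeas k)).aemeasurable hF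
  rw [hm, F_integral] at h
  exact h.symm

include hmeas hindep hunif in
lemma ae_distinct : ∀ᵐ ω ∂P, ∀ i k : Fin n, i ≠ k → Z i ω ≠ Z k ω := by
  rw [ae_all_iff]
  intro i
  rw [ae_all_iff]
  intro k
  by_cases hik : i = k
  · filter_upwards with ω h; exact absurd hik h
  · have hdiag : MeasurableSet {p : ℝ × ℝ | p.1 = p.2} :=
      measurableSet_eq_fun measurable_fst measurable_snd
    have hm : Measurable (fun ω => (Z i ω, Z k ω)) := (hmeas i).prodMk (hmeas k)
    have h0 : P {ω | Z i ω = Z k ω} = 0 := by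
      have he : {ω | Z i ω = Z k ω}
          = (fun ω => (Z i ω, Z k ω)) ⁻¹' {p : ℝ × ℝ | p.1 = p.2} := rfl
      rw [he, ← Measure.map_apply hm hdiag, pair_law P Z hmeas hindep hunif hik]
      rw [Measure.prod_apply hdiag]
      have hx : ∀ x : ℝ, (Prod.mk x ⁻¹' {p : ℝ × ℝ | p.1 = p.2}) = {x} := by
        intro x; ext y; simp [eq_comm]
      have h1 : ∀ x : ℝ, unif {x} = 0 := fun x => by
        rw [unif, Measure.restrict_apply (measurableSet_singleton x)]
        exact measure_mono_null Set.inter_subset_left (Real.volume_singleton)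
      simp [hx, h1]
    rw [ae_iff]
    have he : {a | ¬(i ≠ k → Z i a ≠ Z k a)} = {ω | Z i ω = Z k ω} := by
      ext ω; simp [hik]
    rw [he]; exact h0
end Pair

/-- For `Z₁,…,Zₙ` i.i.d. uniform on `[0,1]` and the lattice `Qᵢⁿ = i/(n+1)` (1-based),
the expected optimal assignment cost satisfies
`E[min_π (1/n) ∑ᵢ (Zᵢ - Q_{π(i)}ⁿ)²] ≤ 1/(4(n+2))`; in particular the bound tends
to `0` as `n → ∞`. -/
theorem stmt_6 {Ω : Type*} [MeasurableSpace Ω] (P : Measure Ω) [IsProbabilityMeasure P]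
    (n : ℕ) (hn : 0 < n) (Z : Fin n → Ω → ℝ)
    (hmeas : ∀ i, Measurable (Z i))
    (hindep : iIndepFun Z P)
    (hunif : ∀ i, Measure.map (Z i) P = volume.restrict (Set.Icc (0 : ℝ) 1)) :
    (∫ ω, ⨅ π : Equiv.Perm (Fin n),
        (1 / (n : ℝ)) * ∑ i : Fin n, (Z i ω - ((π i : ℝ) + 1) / ((n : ℝ) + 1)) ^ 2 ∂P)
      ≤ 1 / (4 * ((n : ℝ) + 2)) ∧
    Tendsto (fun m : ℕ => 1 / (4 * ((m : ℝ) + 2))) atTop (nhds 0) := by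
  classical
  have hten : Tendsto (fun m : ℕ => 1 / (4 * ((m : ℝ) + 2))) atTop (nhds 0) := by
    simp only [one_div]
    apply Tendsto.inv_tendsto_atTop
    have h1 : Tendsto (fun m : ℕ => ((m : ℝ) + 2)) atTop atTop :=
      tendsto_atTop_add_const_right _ _ tendsto_natCast_atTop_atTop
    exact h1.const_mul_atTop (by norm_num)
  refine ⟨?_, hten⟩
  have hunif' : ∀ i, Measure.map (Z i) P = unif := fun i => hunif i
  -- auxiliary integrable functions
  have hIpow : ∀ (i : Fin n) (p : ℕ), Integrable (fun ω => Z i ω ^ p) P :=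
    fun i p => Zpow_integrable P Z hmeas hunif' i p
  have hI1 : ∀ i : Fin n, Integrable (Z i) P := fun i => by
    simpa using hIpow i 1
  have hIite : ∀ i k : Fin n, Integrable (fun ω => if Z k ω < Z i ω then Z i ω else 0) P := by
    intro i k
    by_cases hik : i = k
    · subst hik
      simp only [lt_irrefl, if_false]
      exact integrable_const 0
    · exact ite_integrable P Z hmeas hindep hunif' hik
  have hIiteVal : ∀ i k : Fin n,
      ∫ ω, (if Z k ω < Z i ω then Z i ω else 0) ∂P = if k = i then 0 else 1/3 := by
    intro i k
    by_cases hik : k = i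
    · subst hik
      simp only [lt_irrefl, if_false, if_pos rfl]
      exact integral_zero _ _
    · rw [if_neg hik]
      exact ite_integral P Z hmeas hindep hunif' (fun h => hik h.symm)
  have hIT2i : ∀ i : Fin n,
      Integrable (fun ω => Z i ω + ∑ k, if Z k ω < Z i ω then Z i ω else 0) P := fun i =>
    (hI1 i).add (integrable_finset_sum _ (fun k _ => hIite i k))
  set C : ℝ := ∑ j : Fin n, (((j:ℝ)+1)/((n:ℝ)+1))^2 with hC
  set g : Ω → ℝ := fun ω => (1/(n:ℝ)) * ((∑ i, (Z i ω)^2)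
      - (2/((n:ℝ)+1)) * (∑ i, (Z i ω + ∑ k, (if Z k ω < Z i ω then Z i ω else 0)))
      + C) with hg
  have hgint : Integrable g P := by
    apply Integrable.const_mul
    apply Integrable.add
    · apply Integrable.sub
      · exact integrable_finset_sum _ (fun i _ => hIpow i 2)
      · exact (integrable_finset_sum _ (fun i _ => hIT2i i)).const_mul _
    · exact integrable_const _
  have hle : ∀ᵐ ω ∂P, (⨅ π : Equiv.Perm (Fin n),
      (1 / (n : ℝ)) * ∑ i : Fin n, (Z i ω - ((π i : ℝ) + 1) / ((n : ℝ) + 1)) ^ 2) ≤ g ω := by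
    filter_upwards [ae_distinct P Z hmeas hindep hunif'] with ω hω
    exact pointwise_bound n (fun i => Z i ω) hω
  have hnn : (0 : Ω → ℝ) ≤ᵐ[P] fun ω => ⨅ π : Equiv.Perm (Fin n),
      (1 / (n : ℝ)) * ∑ i : Fin n, (Z i ω - ((π i : ℝ) + 1) / ((n : ℝ) + 1)) ^ 2 := by
    filter_upwards with ω
    exact Real.iInf_nonneg (fun π => by positivity)
  refine le_trans (integral_mono_of_nonneg hnn hgint hle) ?_
  -- compute ∫ g
  have hZ1 : ∀ i : Fin n, ∫ ω, Z i ω ∂P = 1/2 := fun i => by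
    have h := Zpow_integral P Z hmeas hunif' i 1
    norm_num at h
    exact h
  have hZ2 : ∀ i : Fin n, ∫ ω, Z i ω ^ 2 ∂P = 1/3 := fun i => by
    have h := Zpow_integral P Z hmeas hunif' i 2
    norm_num at h
    exact h
  have hT2i : ∀ i : Fin n,
      ∫ ω, (Z i ω + ∑ k, if Z k ω < Z i ω then Z i ω else 0) ∂P
        = 1/2 + ((n:ℝ) - 1)/3 := by
    intro i
    rw [integral_add (hI1 i) (integrable_finset_sum _ (fun k _ => hIite i k)),
      integral_finset_sum _ (fun k _ => hIite i k), hZ1 i,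
      Finset.sum_congr rfl (fun k _ => hIiteVal i k)]
    have hsum : (∑ k : Fin n, if k = i then (0:ℝ) else 1/3) = ((n:ℝ) - 1)/3 := by
      have h1 : ∀ k : Fin n, (if k = i then (0:ℝ) else 1/3)
          = 1/3 - (if k = i then (1/3 : ℝ) else 0) := by
        intro k; split_ifs <;> ring
      rw [Finset.sum_congr rfl (fun k _ => h1 k), Finset.sum_sub_distrib,
        Finset.sum_const, Finset.sum_ite_eq' Finset.univ i (fun _ => (1/3 : ℝ))]
      simp
      ring
    rw [hsum]
  have hCval : C = (n:ℝ)*(2*(n:ℝ)+1)/(6*((n:ℝ)+1)) := by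
    rw [hC]
    rw [Fin.sum_univ_eq_sum_range (fun j => (((j:ℝ)+1)/((n:ℝ)+1))^2)]
    have h1 : ∀ j ∈ Finset.range n, (((j:ℝ)+1)/((n:ℝ)+1))^2
        = ((j:ℝ)+1)^2 * (1/((n:ℝ)+1)^2) := by
      intro j _; field_simp
    rw [Finset.sum_congr rfl h1, ← Finset.sum_mul, sum_sq_aux]
    have hn1 : ((n:ℝ)+1) ≠ 0 := by positivity
    field_simp
  have hmul : Integrable (fun a => (2/((n:ℝ)+1)) * ∑ i : Fin n,
      (Z i a + ∑ k : Fin n, if Z k a < Z i a then Z i a else 0)) P :=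
    (integrable_finset_sum _ (fun i _ => hIT2i i)).const_mul _
  have hsub : Integrable (fun a => (∑ i : Fin n, Z i a ^ 2) - (2/((n:ℝ)+1)) * ∑ i : Fin n,
      (Z i a + ∑ k : Fin n, if Z k a < Z i a then Z i a else 0)) P :=
    (integrable_finset_sum _ (fun i _ => hIpow i 2)).sub hmul
  have hgval : ∫ ω, g ω ∂P = 1/(6*((n:ℝ)+1)) := by
    rw [hg]
    simp only []
    rw [MeasureTheory.integral_const_mul]
    rw [integral_add hsub (integrable_const C)]
    rw [integral_sub (integrable_finset_sum _ (fun i _ => hIpow i 2)) hmul]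
    rw [integral_finset_sum _ (fun i _ => hIpow i 2),
      MeasureTheory.integral_const_mul,
      integral_finset_sum _ (fun i _ => hIT2i i)]
    rw [Finset.sum_congr rfl (fun i _ => hZ2 i),
      Finset.sum_congr rfl (fun i _ => hT2i i)]
    rw [Finset.sum_const, Finset.sum_const, integral_const]
    simp only [measure_univ, probReal_univ, ENNReal.toReal_one, one_smul, Finset.card_univ,
      Fintype.card_fin, nsmul_eq_mul]
    rw [hCval]
    have hn0 : (n:ℝ) ≠ 0 := Nat.cast_ne_zero.mpr hn.ne'
    have hn1 : ((n:ℝ)+1) ≠ 0 := by positivity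
    field_simp
    ring
  rw [hgval]
  have hn1 : (1:ℝ) ≤ (n:ℝ) := by exact_mod_cast hn
  rw [div_le_div_iff₀ (by positivity) (by positivity)]
  nlinarith [hn1]
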